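/- arXiv:gr-qc/0104090 — 3 statements merged into one kernel-verified Lean document; each statement's English description precedes it below -/
import Mathlib

section
/- Let T be a bilinear form (rank-2 tensor) on a Lorentzian vector space such that the 'square' T_{ac} T_b{}^c (contraction on the second index of each factor via the metric) is a nonzero tensor with the dominant property. Then either T or -T has the dominant property. -/
noncomputable section

/-- Minkowski signature factors: (+1, -1, ..., -1). -/
def eta {n : ℕ} (i : Fin (n + 1)) : ℝ := if i = 0 then 1 else -1

/-- The Minkowski (Lorentzian) inner product of signature (+,-,...,-). -/
def mink {n : ℕ} (u v : Fin (n + 1) → ℝ) : ℝ := ∑ i, eta i * u i * v i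

/-- A causal future-pointing vector. -/
def CausalFuture {n : ℕ} (u : Fin (n + 1) → ℝ) : Prop :=
  0 ≤ mink u u ∧ u ≠ 0 ∧ 0 < u 0

/-- A null future-pointing vector. -/
def NullFuture {n : ℕ} (u : Fin (n + 1) → ℝ) : Prop :=
  mink u u = 0 ∧ u ≠ 0 ∧ 0 < u 0

/-- A timelike future-pointing vector. -/
def TimelikeFuture {n : ℕ} (u : Fin (n + 1) → ℝ) : Prop :=
  0 < mink u u ∧ 0 < u 0

/-- The Lorentzian metric as a matrix (covariant components). -/
def gMat {n : ℕ} : Matrix (Fin (n + 1)) (Fin (n + 1)) ℝ := Matrix.diagonal eta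

/-- Contraction of a rank-2 covariant tensor with two vectors. -/
def quad {n : ℕ} (T : Matrix (Fin (n + 1)) (Fin (n + 1)) ℝ) (u v : Fin (n + 1) → ℝ) : ℝ :=
  ∑ a, ∑ b, u a * T a b * v b

/-- The dominant property for rank-2 tensors. -/
def DP2 {n : ℕ} (T : Matrix (Fin (n + 1)) (Fin (n + 1)) ℝ) : Prop :=
  ∀ u v, CausalFuture u → CausalFuture v → 0 ≤ quad T u v

/-- (T ₂×₂ T)_{ab} = T_{ac} T_b{}^c : contraction on the second index of each factor. -/
def sq2 {n : ℕ} (T : Matrix (Fin (n + 1)) (Fin (n + 1)) ℝ) :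
    Matrix (Fin (n + 1)) (Fin (n + 1)) ℝ :=
  Matrix.of fun a b => ∑ c, eta c * T a c * T b c

/-- (T ₁×₁ T)_{ab} = T_{ca} T^c{}_b : contraction on the first index of each factor. -/
def sq1 {n : ℕ} (T : Matrix (Fin (n + 1)) (Fin (n + 1)) ℝ) :
    Matrix (Fin (n + 1)) (Fin (n + 1)) ℝ :=
  Matrix.of fun a b => ∑ c, eta c * T c a * T c b

/-- The linear map v^a ↦ v^a T_a{}^b defined by a rank-2 tensor T. -/
def tmap {n : ℕ} (T : Matrix (Fin (n + 1)) (Fin (n + 1)) ℝ) (v : Fin (n + 1) → ℝ) :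
    Fin (n + 1) → ℝ := fun b => eta b * ∑ a, v a * T a b

/-- (A×B)_{ab} := A_{ca} B^c{}_b. -/
def xprod {n : ℕ} (A B : Matrix (Fin (n + 1)) (Fin (n + 1)) ℝ) :
    Matrix (Fin (n + 1)) (Fin (n + 1)) ℝ :=
  Matrix.of fun a b => ∑ c, eta c * A c a * B c b

/-- The dominant property for rank-r covariant tensors. -/
def DP {n r : ℕ} (T : MultilinearMap ℝ (fun _ : Fin r => (Fin (n + 1) → ℝ)) ℝ) : Prop :=
  ∀ u : Fin r → (Fin (n + 1) → ℝ), (∀ i, CausalFuture (u i)) → 0 ≤ T u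

section Aux
variable {n : ℕ}

lemma eta_sq (i : Fin (n+1)) : eta i * eta i = 1 := by
  unfold eta; split <;> norm_num

lemma mink_split (u v : Fin (n+1) → ℝ) :
    mink u v = u 0 * v 0 - ∑ i : Fin n, u i.succ * v i.succ := by
  unfold mink
  rw [Fin.sum_univ_succ]
  simp [eta, Fin.succ_ne_zero]
  ring_nf

lemma causal_zero (u : Fin (n+1) → ℝ) (hm : 0 ≤ mink u u) (h0 : u 0 = 0) : u = 0 := by
  rw [mink_split, h0] at hm
  have hnn : ∀ j ∈ Finset.univ, 0 ≤ u (Fin.succ j) * u (Fin.succ j) :=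
    fun j _ => mul_self_nonneg _
  have hz : ∑ j : Fin n, u j.succ * u j.succ = 0 := by
    have := Finset.sum_nonneg hnn
    nlinarith
  have hall := (Finset.sum_eq_zero_iff_of_nonneg hnn).mp hz
  funext i
  refine Fin.cases ?_ ?_ i
  · simpa using h0
  · intro j
    simpa using mul_self_eq_zero.mp (hall j (Finset.mem_univ j))

lemma mink_ff (u v : Fin (n+1) → ℝ) (hu : 0 ≤ mink u u) (hv : 0 ≤ mink v v)
    (hu0 : 0 ≤ u 0) (hv0 : 0 ≤ v 0) : 0 ≤ mink u v := by
  have cs := Finset.sum_mul_sq_le_sq_mul_sq Finset.univ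
    (fun i : Fin n => u i.succ) (fun i : Fin n => v i.succ)
  simp only [sq] at cs
  rw [mink_split] at hu hv ⊢
  have hA : (0:ℝ) ≤ ∑ i : Fin n, u i.succ * u i.succ :=
    Finset.sum_nonneg fun j _ => mul_self_nonneg _
  have hB : (0:ℝ) ≤ ∑ i : Fin n, v i.succ * v i.succ :=
    Finset.sum_nonneg fun j _ => mul_self_nonneg _
  nlinarith [mul_nonneg hu0 hv0, mul_nonneg hA hB, sq_nonneg (u 0 * v 0 + ∑ i : Fin n, u i.succ * v i.succ)]

end Aux
section Aux2
variable {n : ℕ}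

lemma triple_swap (f : Fin (n+1) → Fin (n+1) → Fin (n+1) → ℝ) :
    ∑ a, ∑ b, ∑ c, f a b c = ∑ c, ∑ a, ∑ b, f a b c :=
  calc ∑ a, ∑ b, ∑ c, f a b c
      = ∑ a, ∑ c, ∑ b, f a b c := Finset.sum_congr rfl fun _ _ => Finset.sum_comm
    _ = ∑ c, ∑ a, ∑ b, f a b c := Finset.sum_comm

lemma mink_quad (s t : ℝ) (x y : Fin (n+1) → ℝ) :
    mink (s • x + t • y) (s • x + t • y)
      = s*s*mink x x + (2*s*t)*mink x y + t*t*mink y y := by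
  unfold mink
  simp only [Pi.add_apply, Pi.smul_apply, smul_eq_mul, Finset.mul_sum]
  rw [← Finset.sum_add_distrib, ← Finset.sum_add_distrib]
  exact Finset.sum_congr rfl (by intros; ring)

lemma mink_smul_smul (c d : ℝ) (x y : Fin (n+1) → ℝ) :
    mink (c • x) (d • y) = c * d * mink x y := by
  unfold mink
  simp only [Pi.smul_apply, smul_eq_mul, Finset.mul_sum]
  exact Finset.sum_congr rfl (by intros; ring)

lemma mink_sub_sub (p q r s : Fin (n+1) → ℝ) :
    mink (p - q) (r - s) = mink p r - mink p s - mink q r + mink q s := by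
  have expand : ∀ i : Fin (n+1), eta i * (p - q) i * (r - s) i
      = eta i * p i * r i - eta i * p i * s i - (eta i * q i * r i - eta i * q i * s i) := by
    intro i; simp only [Pi.sub_apply]; ring
  unfold mink
  simp only [expand]
  rw [Finset.sum_sub_distrib, Finset.sum_sub_distrib, Finset.sum_sub_distrib]
  ring

lemma mink_neg_left (x y : Fin (n+1) → ℝ) : mink (-x) y = - mink x y := by
  have expand : ∀ i : Fin (n+1), eta i * (-x) i * y i = -(eta i * x i * y i) := by
    intro i; simp only [Pi.neg_apply]; ring
  unfold mink
  simp only [expand, Finset.sum_neg_distrib]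

lemma tmap_sub (T : Matrix (Fin (n+1)) (Fin (n+1)) ℝ) (x y : Fin (n+1) → ℝ) :
    tmap T (x - y) = tmap T x - tmap T y := by
  funext b
  simp [tmap, sub_mul, Finset.sum_sub_distrib, mul_sub]

lemma tmap_combo (T : Matrix (Fin (n+1)) (Fin (n+1)) ℝ) (s t : ℝ) (x y : Fin (n+1) → ℝ) :
    tmap T (s • x + t • y) = s • tmap T x + t • tmap T y := by
  funext b
  simp only [tmap, Pi.add_apply, Pi.smul_apply, smul_eq_mul, add_mul,
    Finset.sum_add_distrib, Finset.mul_sum, mul_add]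
  congr 1 <;> exact Finset.sum_congr rfl (by intros; ring)

lemma quad_eq_mink (T : Matrix (Fin (n+1)) (Fin (n+1)) ℝ) (u v : Fin (n+1) → ℝ) :
    quad T u v = mink (tmap T u) v := by
  unfold quad mink tmap
  simp only [Finset.mul_sum, Finset.sum_mul]
  rw [Finset.sum_comm]
  refine Finset.sum_congr rfl fun b _ => Finset.sum_congr rfl fun a _ => ?_
  linear_combination (-(u a * T a b * v b)) * eta_sq b

lemma quad_sq2 (T : Matrix (Fin (n+1)) (Fin (n+1)) ℝ) (u v : Fin (n+1) → ℝ) :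
    quad (sq2 T) u v = mink (tmap T u) (tmap T v) := by
  unfold quad sq2 mink tmap
  simp only [Matrix.of_apply, Finset.mul_sum, Finset.sum_mul]
  rw [triple_swap]
  refine Finset.sum_congr rfl fun c _ => ?_
  rw [Finset.sum_comm]
  refine Finset.sum_congr rfl fun b _ => Finset.sum_congr rfl fun a _ => ?_
  linear_combination (-(eta c * (u a * T a c * (v b * T b c)))) * eta_sq c

end Aux2
section Aux3
variable {n : ℕ}

lemma mink_comm (u v : Fin (n+1) → ℝ) : mink u v = mink v u := by
  unfold mink; exact Finset.sum_congr rfl (by intros; ring)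

lemma mink_neg_neg (x y : Fin (n+1) → ℝ) : mink (-x) (-y) = mink x y := by
  rw [mink_neg_left, mink_comm, mink_neg_left, mink_comm, neg_neg]

lemma mink_smul_right (c : ℝ) (x y : Fin (n+1) → ℝ) :
    mink x (c • y) = c * mink x y := by
  unfold mink
  rw [Finset.mul_sum]
  exact Finset.sum_congr rfl (by intros; simp; ring)

lemma mink_single_left (a : Fin (n+1)) (x : Fin (n+1) → ℝ) :
    mink (Pi.single a (1:ℝ)) x = eta a * x a := by
  unfold mink
  rw [Finset.sum_eq_single a]
  · simp
  · intro b _ hb; simp [Pi.single_eq_of_ne hb]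
  · simp

lemma quad_neg (T : Matrix (Fin (n+1)) (Fin (n+1)) ℝ) (u v : Fin (n+1) → ℝ) :
    quad (-T) u v = - quad T u v := by
  unfold quad
  simp [Matrix.neg_apply, mul_neg, neg_mul, Finset.sum_neg_distrib]

lemma quad_single (S : Matrix (Fin (n+1)) (Fin (n+1)) ℝ) (a b : Fin (n+1)) :
    quad S (Pi.single a (1:ℝ)) (Pi.single b 1) = S a b := by
  unfold quad
  rw [Finset.sum_eq_single a]
  · rw [Finset.sum_eq_single b]
    · simp
    · intro c _ hc; simp [Pi.single_eq_of_ne hc]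
    · simp
  · intro c _ hc
    exact Finset.sum_eq_zero fun d _ => by simp [Pi.single_eq_of_ne hc]
  · simp

lemma cf_of (u : Fin (n+1) → ℝ) (h0 : 0 < u 0) (hm : 0 ≤ mink u u) : CausalFuture u :=
  ⟨hm, fun h => by simp [h] at h0, h0⟩

def e0v (n : ℕ) : Fin (n+1) → ℝ := Pi.single 0 1

def wvec {n : ℕ} (a : Fin (n+1)) : Fin (n+1) → ℝ := e0v n + Pi.single a 1

lemma eta_ge (a : Fin (n+1)) : (-1:ℝ) ≤ eta a := by unfold eta; split <;> norm_num

lemma cf_e0v : CausalFuture (e0v n) := by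
  refine cf_of _ (by simp [e0v]) ?_
  rw [e0v, mink_single_left]
  simp [eta]

lemma cf_wvec (a : Fin (n+1)) : CausalFuture (wvec a) := by
  have hs0 : (0:ℝ) ≤ (Pi.single a (1:ℝ) : Fin (n+1) → ℝ) 0 := by
    rcases eq_or_ne (0 : Fin (n+1)) a with h | h
    · subst h; simp
    · simp [Pi.single_eq_of_ne h]
  refine cf_of _ ?_ ?_
  · have : wvec a 0 = 1 + (Pi.single a (1:ℝ) : Fin (n+1) → ℝ) 0 := by simp [wvec, e0v]
    rw [this]; linarith
  · have hw : wvec a = (1:ℝ) • e0v n + (1:ℝ) • (Pi.single a 1 : Fin (n+1) → ℝ) := by simp [wvec]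
    rw [hw, mink_quad]
    have h1 : mink (e0v n) (e0v n) = 1 := by rw [e0v, mink_single_left]; simp [eta]
    have h2 : mink (e0v n) (Pi.single a 1 : Fin (n+1) → ℝ) = (Pi.single a (1:ℝ) : Fin (n+1) → ℝ) 0 := by
      rw [e0v, mink_single_left]; simp [eta]
    have h3 : mink (Pi.single a (1:ℝ)) (Pi.single a 1 : Fin (n+1) → ℝ) = eta a := by
      rw [mink_single_left]; simp
    rw [h1, h2, h3]
    have := eta_ge a
    linarith
end Aux3
/-- if the square T_{ac}T_b{}^c of a rank-2 tensor is a nonzero tensor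
with the dominant property, then T or -T has the dominant property. -/
theorem stmt7 {n : ℕ} (T : Matrix (Fin (n + 1)) (Fin (n + 1)) ℝ)
    (hne : sq2 T ≠ 0) (hdp : DP2 (sq2 T)) :
    DP2 T ∨ DP2 (-T) := by
  classical
  have key : ∀ u v, CausalFuture u → CausalFuture v → 0 ≤ mink (tmap T u) (tmap T v) := by
    intro u v hu hv
    rw [← quad_sq2]
    exact hdp u v hu hv
  have seg : ∀ u₁ u₂, CausalFuture u₁ → CausalFuture u₂ → 0 < tmap T u₁ 0 → tmap T u₂ 0 < 0 →
      ∃ l : ℝ, 0 < l ∧ tmap T u₂ = (-l) • tmap T u₁ := by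
    intro u₁ u₂ h1 h2 ha hb
    set a := tmap T u₁ 0 with ha'
    set b := tmap T u₂ 0 with hb'
    have hab : 0 < a - b := by linarith
    obtain ⟨t, ht0, ht1, htv⟩ : ∃ t : ℝ, 0 < t ∧ t < 1 ∧ (1 - t) * a + t * b = 0 := by
      refine ⟨a / (a - b), div_pos ha hab, (div_lt_one hab).mpr (by linarith), ?_⟩
      field_simp
      ring
    have htne : t ≠ 0 := ne_of_gt ht0
    set u : Fin (n+1) → ℝ := (1 - t) • u₁ + t • u₂ with hu
    have hu0 : 0 < u 0 := by
      have e1 := h1.2.2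
      have e2 := h2.2.2
      have hc : u 0 = (1-t) * u₁ 0 + t * u₂ 0 := by simp [hu]
      rw [hc]
      nlinarith
    have m12 : 0 ≤ mink u₁ u₂ := mink_ff _ _ h1.1 h2.1 h1.2.2.le h2.2.2.le
    have hmu : 0 ≤ mink u u := by
      rw [hu, mink_quad]
      have k1 : 0 ≤ (1-t) * (1-t) * mink u₁ u₁ :=
        mul_nonneg (mul_nonneg (by linarith) (by linarith)) h1.1
      have k2 : 0 ≤ 2 * (1-t) * t * mink u₁ u₂ :=
        mul_nonneg (mul_nonneg (by linarith) (by linarith)) m12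
      have k3 : 0 ≤ t * t * mink u₂ u₂ :=
        mul_nonneg (mul_nonneg (by linarith) (by linarith)) h2.1
      linarith
    have hcf : CausalFuture u := cf_of u hu0 hmu
    have hWu : tmap T u = (1-t) • tmap T u₁ + t • tmap T u₂ := by
      rw [hu, tmap_combo]
    have hW0 : tmap T u 0 = 0 := by
      rw [hWu]
      simp only [Pi.add_apply, Pi.smul_apply, smul_eq_mul]
      rw [← ha', ← hb']
      exact htv
    have hWz : tmap T u = 0 := causal_zero _ (key u u hcf hcf) hW0
    have heq : (1 - t) • tmap T u₁ + t • tmap T u₂ = 0 := by rw [← hWu]; exact hWz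
    refine ⟨(1 - t)/t, div_pos (by linarith) ht0, ?_⟩
    funext i
    have hc := congrFun heq i
    simp only [Pi.add_apply, Pi.smul_apply, Pi.zero_apply, Pi.neg_apply, smul_eq_mul] at hc ⊢
    field_simp
    linear_combination hc
  by_cases hA : ∀ u, CausalFuture u → 0 ≤ tmap T u 0
  · left
    intro u v hu hv
    rw [quad_eq_mink]
    exact mink_ff _ _ (key u u hu hu) hv.1 (hA u hu) hv.2.2.le
  push_neg at hA
  obtain ⟨u₂, hu₂, hb⟩ := hA
  by_cases hB : ∀ u, CausalFuture u → tmap T u 0 ≤ 0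
  · right
    intro u v hu hv
    rw [quad_neg, quad_eq_mink, ← mink_neg_left]
    refine mink_ff _ _ ?_ hv.1 ?_ hv.2.2.le
    · rw [mink_neg_neg]; exact key u u hu hu
    · simp only [Pi.neg_apply]
      have := hB u hu
      linarith
  push_neg at hB
  obtain ⟨u₁, hu₁, ha⟩ := hB
  exfalso
  obtain ⟨l, hl, hW12⟩ := seg u₁ u₂ hu₁ hu₂ ha hb
  have hnull : mink (tmap T u₁) (tmap T u₁) = 0 := by
    have h12 := key u₁ u₂ hu₁ hu₂
    rw [hW12, mink_smul_right] at h12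
    have h11 := key u₁ u₁ hu₁ hu₁
    nlinarith
  have claim : ∀ u, CausalFuture u → ∃ c : ℝ, tmap T u = c • tmap T u₁ := by
    intro u hu
    rcases lt_trichotomy (tmap T u 0) 0 with h | h | h
    · obtain ⟨m, hm, he⟩ := seg u₁ u hu₁ hu ha h
      exact ⟨-m, he⟩
    · exact ⟨0, by rw [causal_zero _ (key u u hu hu) h, zero_smul]⟩
    · obtain ⟨m, hm, he⟩ := seg u u₂ hu hu₂ h hb
      refine ⟨l / m, ?_⟩
      have hmm : (-m) • tmap T u = (-l) • tmap T u₁ := by rw [← he, ← hW12]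
      funext i
      have hc := congrFun hmm i
      simp only [Pi.smul_apply, smul_eq_mul] at hc ⊢
      have hmne : m ≠ 0 := ne_of_gt hm
      field_simp
      linear_combination -hc
  have pairzero : ∀ u v, CausalFuture u → CausalFuture v →
      mink (tmap T u) (tmap T v) = 0 := by
    intro u v hu hv
    obtain ⟨c, hc⟩ := claim u hu
    obtain ⟨d, hd⟩ := claim v hv
    rw [hc, hd, mink_smul_smul, hnull, mul_zero]
  apply hne
  ext a b
  have hsingle : ∀ c : Fin (n+1), (Pi.single c (1:ℝ) : Fin (n+1) → ℝ) = wvec c - e0v n := by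
    intro c
    rw [wvec, add_sub_cancel_left]
  have : sq2 T a b = quad (sq2 T) (Pi.single a (1:ℝ)) (Pi.single b 1) := (quad_single _ _ _).symm
  rw [Matrix.zero_apply, this, quad_sq2, hsingle, hsingle, tmap_sub, tmap_sub, mink_sub_sub,
    pairzero _ _ (cf_wvec a) (cf_wvec b), pairzero _ _ (cf_wvec a) cf_e0v,
    pairzero _ _ cf_e0v (cf_wvec b), pairzero _ _ cf_e0v cf_e0v]
  ring
end
end

section
/- In dimension N ≥ 3, if a rank-2 tensor T satisfies T_{ac} T_b{}^c = f·g_{ab}, then f ≥ 0. -/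
noncomputable section

lemma mink_nonpos_of_zero {n : ℕ} (u : Fin (n + 1) → ℝ) (h0 : u 0 = 0) :
    mink u u ≤ 0 := by
  unfold mink
  apply Finset.sum_nonpos
  intro i _
  by_cases hi : i = 0
  · subst hi; simp [h0]
  · simp only [eta, if_neg hi]
    nlinarith [sq_nonneg (u i)]

lemma mink_expand {n : ℕ} (u v : Fin (n + 1) → ℝ) (a b : ℝ) :
    mink (fun c => a * u c + b * v c) (fun c => a * u c + b * v c)
      = a ^ 2 * mink u u + 2 * a * b * mink u v + b ^ 2 * mink v v := by
  simp only [mink, Finset.mul_sum, ← Finset.sum_add_distrib]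
  apply Finset.sum_congr rfl
  intro i _
  ring

/-- in dimension ≥ 3, T_{ac}T_b{}^c = f·g_{ab} implies f ≥ 0. -/
theorem stmt12 {n : ℕ} (T : Matrix (Fin (n + 3)) (Fin (n + 3)) ℝ) (f : ℝ)
    (h : sq2 T = f • gMat) : 0 ≤ f := by
  set i1 : Fin (n + 3) := ⟨1, by omega⟩
  set i2 : Fin (n + 3) := ⟨2, by omega⟩
  have h1 : i1 ≠ 0 := by simp [i1, Fin.ext_iff]
  have h2 : i2 ≠ 0 := by simp [i2, Fin.ext_iff]
  have h12 : i1 ≠ i2 := by simp [i1, i2, Fin.ext_iff]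
  have key : ∀ a b : Fin (n + 3), mink (T a) (T b) = f * (Matrix.diagonal eta a b) := by
    intro a b
    have := congrFun (congrFun h a) b
    simpa [sq2, gMat, mink, Matrix.smul_apply] using this
  set u : Fin (n + 3) → ℝ := T i1
  set v : Fin (n + 3) → ℝ := T i2
  have hu : mink u u = -f := by
    have := key i1 i1; simpa [Matrix.diagonal, eta, h1] using this
  have hv : mink v v = -f := by
    have := key i2 i2; simpa [Matrix.diagonal, eta, h2] using this
  have huv : mink u v = 0 := by
    have := key i1 i2; simpa [Matrix.diagonal_apply_ne _ h12] using this
  by_contra hf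
  push_neg at hf
  -- u, v are timelike, so u 0 ≠ 0
  have hu0 : u 0 ≠ 0 := by
    intro h0
    have := mink_nonpos_of_zero u h0
    linarith [hu ▸ this]
  -- w := v0 • u - u0 • v has w 0 = 0 but positive Minkowski norm
  have hw := mink_expand u v (v 0) (-(u 0))
  have hw0 : mink (fun c => v 0 * u c + -(u 0) * v c)
      (fun c => v 0 * u c + -(u 0) * v c) ≤ 0 := by
    apply mink_nonpos_of_zero
    ring
  rw [hw, hu, hv, huv] at hw0
  nlinarith [sq_nonneg (v 0), mul_self_pos.mpr hu0]
end
end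

section
/- In any dimension N, if a symmetric rank-2 tensor T satisfies T_{ac} T_b{}^c = 0, then T = β·k⊗k for some scalar β and null covector k; in particular T or -T has the dominant property. -/
noncomputable section

lemma mink_expand_s19 {n : ℕ} (u v : Fin (n + 1) → ℝ) :
    mink u v = u 0 * v 0 - ∑ i : Fin n, u i.succ * v i.succ := by
  rw [mink, Fin.sum_univ_succ]
  simp [eta, Fin.succ_ne_zero, Finset.sum_neg_distrib, sub_eq_add_neg]

lemma null_zero_time {n : ℕ} (r : Fin (n + 1) → ℝ) (hr : mink r r = 0) (h0 : r 0 = 0) :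
    r = 0 := by
  rw [mink_expand_s19, h0] at hr
  have hsum : ∑ i : Fin n, r i.succ * r i.succ = 0 := by linarith
  have hz : ∀ i ∈ Finset.univ, r (Fin.succ i) * r (Fin.succ i) = 0 := by
    rw [← Finset.sum_eq_zero_iff_of_nonneg (fun i _ => mul_self_nonneg _)]
    exact hsum
  funext i
  refine Fin.cases ?_ ?_ i
  · exact h0
  · intro j
    have := hz j (Finset.mem_univ j)
    simpa [mul_self_eq_zero] using this

lemma null_orth_prop {n : ℕ} (r s : Fin (n + 1) → ℝ) (hr : mink r r = 0)
    (hs : mink s s = 0) (hrs : mink r s = 0) :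
    ∀ i, s 0 * r i = r 0 * s i := by
  set w : Fin (n + 1) → ℝ := fun i => s 0 * r i - r 0 * s i with hw
  have hww : mink w w = s 0 ^ 2 * mink r r - 2 * (r 0 * s 0) * mink r s
      + r 0 ^ 2 * mink s s := by
    simp only [mink, hw, Finset.mul_sum, ← Finset.sum_sub_distrib,
      ← Finset.sum_add_distrib]
    exact Finset.sum_congr rfl fun i _ => by ring
  have hw0 : w 0 = 0 := by simp [hw]; ring
  have : w = 0 := null_zero_time w (by rw [hww, hr, hs, hrs]; ring) hw0
  intro i
  have := congrFun this i
  simp [hw] at this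
  linarith

lemma dot_nonneg_of_null {n : ℕ} (k u : Fin (n + 1) → ℝ) (hk : mink k k = 0)
    (hk0 : 0 ≤ k 0) (hu : CausalFuture u) : 0 ≤ ∑ i, k i * u i := by
  obtain ⟨huu, -, hu0⟩ := hu
  rw [mink_expand_s19] at hk huu
  have hCS := Finset.sum_mul_sq_le_sq_mul_sq Finset.univ
    (fun i : Fin n => k i.succ) (fun i : Fin n => u i.succ)
  have hks : ∑ i : Fin n, k i.succ ^ 2 = k 0 ^ 2 := by
    have : ∑ i : Fin n, k i.succ * k i.succ = k 0 * k 0 := by linarith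
    simpa [sq] using this
  have hus : ∑ i : Fin n, u i.succ ^ 2 ≤ u 0 ^ 2 := by
    have : ∑ i : Fin n, u i.succ * u i.succ ≤ u 0 * u 0 := by linarith
    simpa [sq] using this
  rw [Fin.sum_univ_succ]
  set S := ∑ i : Fin n, k i.succ * u i.succ with hS
  have hS2 : S ^ 2 ≤ k 0 ^ 2 * u 0 ^ 2 := by
    calc S ^ 2 ≤ (∑ i : Fin n, k i.succ ^ 2) * ∑ i : Fin n, u i.succ ^ 2 := hCS
    _ ≤ k 0 ^ 2 * u 0 ^ 2 := by
        rw [hks]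
        exact mul_le_mul_of_nonneg_left hus (sq_nonneg _)
  nlinarith [sq_nonneg (k 0 * u 0 + S), mul_nonneg hk0 hu0.le]

lemma quad_rank1 {n : ℕ} (S : Matrix (Fin (n + 1)) (Fin (n + 1)) ℝ) (γ : ℝ)
    (k : Fin (n + 1) → ℝ) (hS : ∀ a b, S a b = γ * k a * k b) (u v : Fin (n + 1) → ℝ) :
    quad S u v = γ * (∑ a, k a * u a) * (∑ b, k b * v b) := by
  unfold quad
  calc (∑ a, ∑ b, u a * S a b * v b)
      = ∑ a, ∑ b, (γ * (k a * u a)) * (k b * v b) :=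
        Finset.sum_congr rfl fun a _ => Finset.sum_congr rfl fun b _ => by rw [hS]; ring
    _ = ∑ a, (γ * (k a * u a)) * ∑ b, (k b * v b) := by
        simp [Finset.mul_sum]
    _ = (∑ a, γ * (k a * u a)) * ∑ b, (k b * v b) := by rw [Finset.sum_mul]
    _ = γ * (∑ a, k a * u a) * (∑ b, k b * v b) := by
        rw [← Finset.mul_sum]

/-- a symmetric rank-2 tensor with T_{ac}T_b{}^c = 0 equals β·k⊗k
for a scalar β and a null covector k; in particular T or -T has the dominant
property. -/
theorem stmt19 {n : ℕ} (T : Matrix (Fin (n + 1)) (Fin (n + 1)) ℝ)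
    (hsymm : ∀ a b, T a b = T b a) (h : sq2 T = 0) :
    (∃ (β : ℝ) (k : Fin (n + 1) → ℝ), mink k k = 0 ∧
      ∀ a b, T a b = β * k a * k b) ∧
    (DP2 T ∨ DP2 (-T)) := by
  have hro : ∀ a b, mink (T a) (T b) = 0 := by
    intro a b
    have := congrFun (congrFun h a) b
    simpa [sq2, mink] using this
  obtain ⟨β, k, hknull, hk0, hT⟩ :
      ∃ (β : ℝ) (k : Fin (n + 1) → ℝ), mink k k = 0 ∧ 0 ≤ k 0 ∧
        ∀ a b, T a b = β * k a * k b := by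
    by_cases hT0 : T = 0
    · exact ⟨0, 0, by simp [mink], le_refl 0, fun a b => by simp [hT0]⟩
    · have hex : ∃ a b, T a b ≠ 0 := by
        by_contra hc
        push_neg at hc
        exact hT0 (by ext a b; simp [hc a b])
      obtain ⟨a₀, b₀, hab⟩ := hex
      set K : Fin (n + 1) → ℝ := T a₀ with hK
      have hKnull : mink K K = 0 := hro a₀ a₀
      have hK0 : K 0 ≠ 0 := by
        intro h0
        have := null_zero_time K hKnull h0
        exact hab (congrFun this b₀)
      have hprop : ∀ a i, K 0 * T a i = T a 0 * K i := fun a i =>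
        null_orth_prop (T a) K (hro a a) hKnull (hro a a₀) i
      have hTa : ∀ a i, T a i = (T a 0 / K 0) * K i := by
        intro a i
        field_simp
        linarith [hprop a i]
      have hT0a : ∀ a, T a 0 = (T 0 0 / K 0) * K a := by
        intro a
        rw [hsymm a 0]
        exact hTa 0 a
      have key : ∀ a b, T a b = (T 0 0 / (K 0 * K 0)) * K a * K b := by
        intro a b
        rw [hTa a b, hT0a a]
        field_simp
      rcases le_or_gt 0 (K 0) with hpos | hneg
      · exact ⟨T 0 0 / (K 0 * K 0), K, hKnull, hpos, key⟩
      · refine ⟨T 0 0 / (K 0 * K 0), -K, ?_, ?_, ?_⟩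
        · have : mink (-K) (-K) = mink K K := by
            simp [mink]
          rw [this, hKnull]
        · simpa using hneg.le
        · intro a b
          rw [key a b]
          simp
  refine ⟨⟨β, k, hknull, hT⟩, ?_⟩
  rcases le_or_gt 0 β with hβ | hβ
  · left
    intro u v hu hv
    rw [quad_rank1 T β k hT u v]
    exact mul_nonneg (mul_nonneg hβ (dot_nonneg_of_null k u hknull hk0 hu))
      (dot_nonneg_of_null k v hknull hk0 hv)
  · right
    intro u v hu hv
    have hnT : ∀ a b, (-T) a b = (-β) * k a * k b := by
      intro a b
      simp [hT a b]
    rw [quad_rank1 (-T) (-β) k hnT u v]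
    exact mul_nonneg (mul_nonneg (by linarith) (dot_nonneg_of_null k u hknull hk0 hu))
      (dot_nonneg_of_null k v hknull hk0 hv)
end
end
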